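/- Let d ≥ 3 and n ≥ 1 be integers, Δ > 0, T = nΔ, h_1, …, h_d ∈ (0, 1), and A > 0, ρ > 0. Write H = ∏_{l=1}^d h_l. Let k : {0, …, n−1} → ℝ satisfy: (i) |k(j)| ≤ A/H for all j; (ii) |k(j)| ≤ (A/∏_{l=2}^d h_l)·(jΔ)^{−1/2} for all j ≥ 1; (iii) |k(j)| ≤ A((jΔ)^{−3/2}/∏_{l=4}^d h_l + 1) for all j ≥ 1; (iv) |k(j)| ≤ (A/H²)·e^{−ρ j Δ} for all j. Then there exist constants C > 0 and T_0 > 0, depending only on A, ρ and d, such that for all T ≥ T_0: (Δ²/T²)·∑_{j=0}^{n−1} (n − j)|k(j)| ≤ (C/T)·(1/(√(h_2 h_3)·∏_{l=4}^d h_l) + 1 + ∑_{l=1}^d |log h_l| + Δ/H). -/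

import Mathlib

open Finset

lemma sum_inv_sqrt (m : ℕ) : ∑ j ∈ Finset.Icc 1 m, 1 / Real.sqrt j ≤ 2 * Real.sqrt m := by
  induction m with
  | zero => simp
  | succ m ih =>
    rw [Finset.sum_Icc_succ_top (by omega)]
    have hs : Real.sqrt m ^ 2 = m := Real.sq_sqrt (by positivity)
    have ht : Real.sqrt (m+1) ^ 2 = (m:ℝ)+1 := by
      have := Real.sq_sqrt (by positivity : (0:ℝ) ≤ (m:ℝ)+1)
      rw [← this]; norm_num
    have ht0 : 0 < Real.sqrt ((m:ℕ)+1) := by positivity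
    have hst : (0:ℝ) ≤ Real.sqrt m := Real.sqrt_nonneg _
    have key : 1 / Real.sqrt ((m:ℕ)+1) ≤ 2 * Real.sqrt ((m:ℕ)+1) - 2 * Real.sqrt m := by
      rw [div_le_iff₀ ht0]
      push_cast at ht ⊢
      nlinarith [sq_nonneg (Real.sqrt ((m:ℝ)+1) - Real.sqrt m)]
    push_cast at key ⊢
    linarith [ih]

lemma term32 (j : ℕ) (hj : 1 ≤ j) :
    1 / ((j:ℝ) * Real.sqrt j) ≤ 6 / Real.sqrt j - 6 / Real.sqrt (j+1) := by
  set s := Real.sqrt j with hs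
  set t := Real.sqrt ((j:ℝ)+1) with htdef
  have hs2 : s ^ 2 = (j:ℝ) := Real.sq_sqrt (by positivity)
  have ht2 : t ^ 2 = (j:ℝ)+1 := Real.sq_sqrt (by positivity)
  have hs1 : 1 ≤ s := by
    rw [hs]
    have : (1:ℝ) = Real.sqrt 1 := by simp
    rw [this]
    exact Real.sqrt_le_sqrt (by exact_mod_cast hj)
  have hst : s ≤ t := Real.sqrt_le_sqrt (by linarith [hs2])
  have hs0 : 0 < s := by linarith
  have ht0 : 0 < t := by linarith
  have hj0 : (0:ℝ) < j := by exact_mod_cast hj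
  have key : t ^ 2 + s * t ≤ 6 * s ^ 2 := by nlinarith
  rw [← hs2, div_sub_div _ _ (ne_of_gt hs0) (ne_of_gt ht0),
    div_le_div_iff₀ (by positivity) (by positivity)]
  nlinarith [mul_le_mul_of_nonneg_right key hs0.le, mul_pos hs0 ht0, sq_nonneg (t-s),
    mul_pos (mul_pos hs0 hs0) ht0]

lemma sum_inv_pow32 (m N : ℕ) (hm : 1 ≤ m) :
    ∑ j ∈ Finset.Ico m (m+N), 1 / ((j:ℝ) * Real.sqrt j) ≤ 6 / Real.sqrt m := by
  have main : ∀ N : ℕ, ∑ j ∈ Finset.Ico m (m+N), 1 / ((j:ℝ) * Real.sqrt j)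
      ≤ 6 / Real.sqrt m - 6 / Real.sqrt (m+N) := by
    intro N
    induction N with
    | zero => simp
    | succ N ih =>
      rw [show m + (N+1) = (m+N) + 1 by ring, Finset.sum_Ico_succ_top (by omega)]
      have hterm := term32 (m+N) (by omega)
      push_cast at hterm ih ⊢
      rw [show (m:ℝ) + ((N:ℝ) + 1) = (m:ℝ) + (N:ℝ) + 1 by ring]
      linarith [hterm, ih]
  have := main N
  have h2 : (0:ℝ) ≤ 6 / Real.sqrt (m+N) := by positivity
  linarith

lemma geom_tail (r : ℝ) (hr0 : 0 < r) (hr1 : r < 1) (m M : ℕ) :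
    ∑ j ∈ Finset.Ico m M, r ^ j ≤ r ^ m / (1 - r) := by
  have h1r : 0 < 1 - r := by linarith
  rcases le_or_gt M m with hMm | hmM
  · rw [Finset.Ico_eq_empty (by omega)]
    simp only [Finset.sum_empty]
    positivity
  · rw [Finset.sum_Ico_eq_sum_range]
    have : ∀ i ∈ Finset.range (M - m), r ^ (m + i) = r ^ m * r ^ i := fun i _ => pow_add r m i
    rw [Finset.sum_congr rfl this, ← Finset.mul_sum]
    have hgeom' : ∑ i ∈ Finset.range (M-m), r ^ i ≤ 1/(1-r) := by
      rw [le_div_iff₀ h1r]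
      have := geom_sum_mul r (M-m)
      nlinarith [pow_pos hr0 (M-m)]
    calc r ^ m * ∑ i ∈ Finset.range (M-m), r ^ i ≤ r ^ m * (1/(1-r)) :=
          mul_le_mul_of_nonneg_left hgeom' (by positivity)
      _ = r ^ m / (1-r) := by ring

set_option maxHeartbeats 2000000 in
theorem discrete_variance_sum_bound_beta2_eq_beta3 (d : ℕ) (hd : 3 ≤ d)
    (A ρ : ℝ) (hA : 0 < A) (hρ : 0 < ρ) :
    ∃ C > (0:ℝ), ∃ T0 > (0:ℝ),
      ∀ (n : ℕ), 1 ≤ n → ∀ (Δ : ℝ), 0 < Δ →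
      ∀ (h : Fin d → ℝ), (∀ l, h l ∈ Set.Ioo (0:ℝ) 1) →
      ∀ (k : ℕ → ℝ),
        (∀ j, j < n → |k j| ≤ A / ∏ l, h l) →
        (∀ j, 1 ≤ j → j < n →
          |k j| ≤ (A / ∏ l ∈ Finset.univ.filter (fun l : Fin d => 1 ≤ l.val), h l)
                    * ((j : ℝ) * Δ) ^ (-(1:ℝ)/2)) →
        (∀ j, 1 ≤ j → j < n →
          |k j| ≤ A * (((j : ℝ) * Δ) ^ (-(3:ℝ)/2)
                          / ∏ l ∈ Finset.univ.filter (fun l : Fin d => 3 ≤ l.val), h l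
                        + 1)) →
        (∀ j, j < n → |k j| ≤ (A / (∏ l, h l) ^ 2) * Real.exp (-ρ * (j : ℝ) * Δ)) →
        T0 ≤ (n : ℝ) * Δ →
        Δ ^ 2 / ((n : ℝ) * Δ) ^ 2 * ∑ j ∈ Finset.range n, ((n : ℝ) - (j : ℝ)) * |k j|
          ≤ C / ((n : ℝ) * Δ)
              * (1 / (Real.sqrt (h ⟨1, by omega⟩ * h ⟨2, by omega⟩)
                        * ∏ l ∈ Finset.univ.filter (fun l : Fin d => 3 ≤ l.val), h l)
                  + 1 + ∑ l, |Real.log (h l)| + Δ / ∏ l, h l) := by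
  classical
  refine ⟨12*A + 4*A/ρ, by positivity, 1, one_pos, ?_⟩
  intro n hn Δ hΔ h hh k hk1 hk2 hk3 hk4 _hT
  set C := 12*A + 4*A/ρ with hCdef
  set P : ℝ := ∏ l ∈ Finset.univ.filter (fun l : Fin d => 3 ≤ l.val), h l with hPdef
  set Q : ℝ := ∏ l ∈ Finset.univ.filter (fun l : Fin d => 1 ≤ l.val), h l with hQdef
  set H : ℝ := ∏ l, h l with hHdef
  have hP0 : 0 < P := Finset.prod_pos (fun l _ => (hh l).1)
  have hQ0 : 0 < Q := Finset.prod_pos (fun l _ => (hh l).1)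
  have hH0 : 0 < H := Finset.prod_pos (fun l _ => (hh l).1)
  have hH1 : H ≤ 1 := Finset.prod_le_one (fun l _ => (hh l).1.le) (fun l _ => (hh l).2.le)
  have h1d : 1 < d := by omega
  have h2d : 2 < d := by omega
  have h0d : 0 < d := by omega
  set a := h ⟨1, h1d⟩ with hadef
  set b := h ⟨2, h2d⟩ with hbdef
  set c := h ⟨0, h0d⟩ with hcdef
  have ha0 : 0 < a := (hh _).1
  have hb0 : 0 < b := (hh _).1
  have hc0 : 0 < c := (hh _).1
  have ha1 : a < 1 := (hh _).2
  have hb1 : b < 1 := (hh _).2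
  have hc1 : c < 1 := (hh _).2
  have hQab : Q = a * b * P := by
    rw [hQdef, hPdef, hadef, hbdef]
    have hins : Finset.univ.filter (fun l : Fin d => 1 ≤ l.val)
        = insert ⟨1, h1d⟩ (insert ⟨2, h2d⟩
            (Finset.univ.filter (fun l : Fin d => 3 ≤ l.val))) := by
      ext l
      simp only [Finset.mem_filter, Finset.mem_univ, true_and, Finset.mem_insert, Fin.ext_iff]
      omega
    rw [hins, Finset.prod_insert (by simp [Fin.ext_iff]),
      Finset.prod_insert (by simp [Fin.ext_iff])]
    ring
  have hHc : H = c * Q := by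
    rw [hHdef, hQdef, hcdef]
    rw [← Finset.prod_filter_mul_prod_filter_not Finset.univ (fun l : Fin d => 1 ≤ l.val)]
    have hsingle : Finset.univ.filter (fun l : Fin d => ¬ 1 ≤ l.val) = {⟨0, h0d⟩} := by
      ext l
      simp only [Finset.mem_filter, Finset.mem_univ, true_and, Finset.mem_singleton,
        Fin.ext_iff]
      omega
    rw [hsingle, Finset.prod_singleton]
    ring
  set sab := Real.sqrt (a * b) with hsabdef
  have hsab0 : 0 < sab := Real.sqrt_pos.mpr (by positivity)
  have hsab2 : sab ^ 2 = a * b := Real.sq_sqrt (by positivity)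
  set L := ∑ l, |Real.log (h l)| with hLdef
  have hL_eq : L = - Real.log H := by
    rw [hLdef, hHdef, Real.log_prod (fun l _ => (hh l).1.ne'), ← Finset.sum_neg_distrib]
    exact Finset.sum_congr rfl fun l _ =>
      (abs_of_nonpos (Real.log_nonpos (hh l).1.le (hh l).2.le))
  have hL0 : 0 ≤ L := Finset.sum_nonneg fun l _ => abs_nonneg _
  have hn0 : (0:ℝ) < n := by exact_mod_cast hn
  -- the key estimate
  have KEY : Δ * ∑ j ∈ Finset.range n, |k j|
      ≤ C * (1 / (sab * P) + 1 + L + Δ / H) := by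
    set r := Real.exp (-(ρ*Δ)) with hrdef
    have hr0 : 0 < r := Real.exp_pos _
    have hr1 : r < 1 := by
      rw [hrdef]
      apply Real.exp_lt_one_iff.mpr
      have := mul_pos hρ hΔ
      linarith
    set t1 := (2/ρ) * L with ht1def
    have ht1_0 : 0 ≤ t1 := by positivity
    set g : ℕ → ℝ := fun j => min (A/H) (min (A/Q * (1/Real.sqrt ((j:ℝ)*Δ)))
      (A/P * (1/(((j:ℝ)*Δ) * Real.sqrt ((j:ℝ)*Δ))))) with hgdef
    set e : ℕ → ℝ := fun j => min A (A/H^2 * r^j) with hedef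
    -- pointwise bound
    have hpt : ∀ j ∈ Finset.Ico 1 n, |k j| ≤ g j + e j := by
      intro j hj
      rw [Finset.mem_Ico] at hj
      obtain ⟨hj1, hjn⟩ := hj
      have hjR : (1:ℝ) ≤ (j:ℝ) := by exact_mod_cast hj1
      have ht0 : 0 < (j:ℝ)*Δ := mul_pos (by linarith) hΔ
      have hst0 : 0 < Real.sqrt ((j:ℝ)*Δ) := Real.sqrt_pos.mpr ht0
      have b1 := hk1 j (by omega)
      have b2 : |k j| ≤ A/Q * (1/Real.sqrt ((j:ℝ)*Δ)) := by
        have hb := hk2 j hj1 hjn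
        have hr : ((j:ℝ)*Δ) ^ (-(1:ℝ)/2) = 1/Real.sqrt ((j:ℝ)*Δ) := by
          rw [show (-(1:ℝ)/2) = -(1/2) by norm_num, Real.rpow_neg ht0.le,
            ← Real.sqrt_eq_rpow, one_div]
        rwa [hr] at hb
      have b3 : |k j| ≤ A/P * (1/(((j:ℝ)*Δ) * Real.sqrt ((j:ℝ)*Δ))) + A := by
        have hb := hk3 j hj1 hjn
        have hrw : ((j:ℝ)*Δ) ^ (-(3:ℝ)/2) = 1/(((j:ℝ)*Δ) * Real.sqrt ((j:ℝ)*Δ)) := by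
          rw [show (-(3:ℝ)/2) = -((3:ℝ)/2) by norm_num, Real.rpow_neg ht0.le,
            show ((3:ℝ)/2) = 1 + 1/2 by norm_num, Real.rpow_add ht0, Real.rpow_one,
            ← Real.sqrt_eq_rpow, one_div]
        rw [hrw] at hb
        calc |k j| ≤ A * (1/(((j:ℝ)*Δ) * Real.sqrt ((j:ℝ)*Δ)) / P + 1) := hb
          _ = A/P * (1/(((j:ℝ)*Δ) * Real.sqrt ((j:ℝ)*Δ))) + A := by ring
      have b4 : |k j| ≤ A/H^2 * r^j := by
        have hb := hk4 j hjn
        have hrw : Real.exp (-ρ * (j:ℝ) * Δ) = r^j := by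
          rw [hrdef, ← Real.exp_nat_mul]
          congr 1
          ring
        rwa [hrw] at hb
      have hg_nonneg : 0 ≤ g j :=
        le_min (by positivity) (le_min (by positivity) (by positivity))
      rcases le_total A (A/H^2 * r^j) with hmin | hmin
      · have he : e j = A := min_eq_left hmin
        rw [he]
        have hcases : g j = A/H ∨ g j = A/Q * (1/Real.sqrt ((j:ℝ)*Δ))
            ∨ g j = A/P * (1/(((j:ℝ)*Δ) * Real.sqrt ((j:ℝ)*Δ))) := by
          simp only [hgdef]
          rcases le_total (A/H) (min (A/Q * (1/Real.sqrt ((j:ℝ)*Δ)))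
              (A/P * (1/(((j:ℝ)*Δ) * Real.sqrt ((j:ℝ)*Δ))))) with hx | hx
          · left; exact min_eq_left hx
          · rcases le_total (A/Q * (1/Real.sqrt ((j:ℝ)*Δ)))
                (A/P * (1/(((j:ℝ)*Δ) * Real.sqrt ((j:ℝ)*Δ)))) with hy | hy
            · right; left; rw [min_eq_right hx, min_eq_left hy]
            · right; right; rw [min_eq_right hx, min_eq_right hy]
        rcases hcases with hgj | hgj | hgj <;> rw [hgj] <;> linarith
      · have he : e j = A/H^2 * r^j := min_eq_right hmin
        rw [he]
        linarith
    -- counting lemma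
    have COUNT : ∀ u : ℝ, 0 ≤ u →
        ((((Finset.Ico 1 n).filter (fun j : ℕ => (j:ℝ)*Δ ≤ u)).card : ℝ)) ≤ u / Δ := by
      intro u hu
      have hsub : (Finset.Ico 1 n).filter (fun j : ℕ => (j:ℝ)*Δ ≤ u)
          ⊆ Finset.Icc (1:ℕ) ⌊u/Δ⌋₊ := by
        intro j hj
        simp only [Finset.mem_filter, Finset.mem_Ico] at hj
        rw [Finset.mem_Icc]
        refine ⟨hj.1.1, Nat.le_floor ?_⟩
        rw [le_div_iff₀ hΔ]
        exact hj.2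
      calc ((((Finset.Ico 1 n).filter (fun j : ℕ => (j:ℝ)*Δ ≤ u)).card : ℝ))
          ≤ ((Finset.Icc (1:ℕ) ⌊u/Δ⌋₊).card : ℝ) := by
            exact_mod_cast Finset.card_le_card hsub
        _ ≤ (⌊u/Δ⌋₊ : ℝ) := by rw [Nat.card_Icc]; simp
        _ ≤ u/Δ := Nat.floor_le (by positivity)
    -- SUM2
    have SUM2 : ∀ v : ℝ, 0 < v →
        ∑ j ∈ (Finset.Ico 1 n).filter (fun j : ℕ => (j:ℝ)*Δ ≤ v),
          (1/Real.sqrt ((j:ℝ)*Δ)) ≤ 2 * Real.sqrt v / Δ := by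
      intro v hv
      have hsub : (Finset.Ico 1 n).filter (fun j : ℕ => (j:ℝ)*Δ ≤ v)
          ⊆ Finset.Icc (1:ℕ) ⌊v/Δ⌋₊ := by
        intro j hj
        simp only [Finset.mem_filter, Finset.mem_Ico] at hj
        rw [Finset.mem_Icc]
        refine ⟨hj.1.1, Nat.le_floor ?_⟩
        rw [le_div_iff₀ hΔ]
        exact hj.2
      have hM : Real.sqrt (⌊v/Δ⌋₊ : ℝ) ≤ Real.sqrt v / Real.sqrt Δ := by
        rw [← Real.sqrt_div hv.le]
        exact Real.sqrt_le_sqrt (Nat.floor_le (by positivity))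
      calc ∑ j ∈ (Finset.Ico 1 n).filter (fun j : ℕ => (j:ℝ)*Δ ≤ v), (1/Real.sqrt ((j:ℝ)*Δ))
          ≤ ∑ j ∈ Finset.Icc (1:ℕ) ⌊v/Δ⌋₊, (1/Real.sqrt ((j:ℝ)*Δ)) :=
            Finset.sum_le_sum_of_subset_of_nonneg hsub (fun j _ _ => by positivity)
        _ = ∑ j ∈ Finset.Icc (1:ℕ) ⌊v/Δ⌋₊, (1/Real.sqrt Δ) * (1/Real.sqrt (j:ℝ)) := by
            refine Finset.sum_congr rfl fun j _ => ?_
            rw [Real.sqrt_mul (Nat.cast_nonneg j)]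
            ring
        _ = (1/Real.sqrt Δ) * ∑ j ∈ Finset.Icc (1:ℕ) ⌊v/Δ⌋₊, 1/Real.sqrt (j:ℝ) := by
            rw [Finset.mul_sum]
        _ ≤ (1/Real.sqrt Δ) * (2 * Real.sqrt (⌊v/Δ⌋₊ : ℝ)) := by
            apply mul_le_mul_of_nonneg_left (sum_inv_sqrt _) (by positivity)
        _ ≤ (1/Real.sqrt Δ) * (2 * (Real.sqrt v / Real.sqrt Δ)) := by
            apply mul_le_mul_of_nonneg_left _ (by positivity)
            linarith
        _ = 2 * Real.sqrt v / (Real.sqrt Δ * Real.sqrt Δ) := by ring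
        _ = 2 * Real.sqrt v / Δ := by rw [Real.mul_self_sqrt hΔ.le]
    -- SUM3
    have SUM3 : ∀ w : ℝ, 0 < w →
        ∑ j ∈ (Finset.Ico 1 n).filter (fun j : ℕ => w < (j:ℝ)*Δ),
          (1/(((j:ℝ)*Δ) * Real.sqrt ((j:ℝ)*Δ))) ≤ 6 / (Δ * Real.sqrt w) := by
      intro w hw
      set m := ⌊w/Δ⌋₊ + 1 with hmdef
      have hm1 : 1 ≤ m := by omega
      have hmR : w/Δ ≤ (m:ℝ) := by
        have := (Nat.lt_floor_add_one (w/Δ)).le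
        push_cast [hmdef]
        push_cast at this
        linarith
      have hsub : (Finset.Ico 1 n).filter (fun j : ℕ => w < (j:ℝ)*Δ)
          ⊆ Finset.Ico m (m + (n - m)) := by
        intro j hj
        simp only [Finset.mem_filter, Finset.mem_Ico] at hj
        rw [Finset.mem_Ico]
        have hjm : ⌊w/Δ⌋₊ < j := by
          have h1 : w/Δ < (j:ℝ) := by
            rw [div_lt_iff₀ hΔ]
            exact hj.2
          have h2 : ((⌊w/Δ⌋₊ : ℕ) : ℝ) ≤ w/Δ := Nat.floor_le (by positivity)
          exact_mod_cast lt_of_le_of_lt h2 h1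
        omega
      have hsqm : Real.sqrt w / Real.sqrt Δ ≤ Real.sqrt (m:ℝ) := by
        rw [← Real.sqrt_div hw.le]
        exact Real.sqrt_le_sqrt hmR
      have hsqm0 : 0 < Real.sqrt w / Real.sqrt Δ := by positivity
      calc ∑ j ∈ (Finset.Ico 1 n).filter (fun j : ℕ => w < (j:ℝ)*Δ),
            (1/(((j:ℝ)*Δ) * Real.sqrt ((j:ℝ)*Δ)))
          ≤ ∑ j ∈ Finset.Ico m (m + (n - m)), (1/(((j:ℝ)*Δ) * Real.sqrt ((j:ℝ)*Δ))) :=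
            Finset.sum_le_sum_of_subset_of_nonneg hsub (fun j hj _ => by
              have hjm : m ≤ j := (Finset.mem_Ico.mp hj).1
              have : (0:ℝ) < (j:ℝ) := by
                have : 1 ≤ j := le_trans hm1 hjm
                exact_mod_cast this
              positivity)
        _ = ∑ j ∈ Finset.Ico m (m + (n - m)),
              (1/(Δ * Real.sqrt Δ)) * (1/((j:ℝ) * Real.sqrt (j:ℝ))) := by
            refine Finset.sum_congr rfl fun j _ => ?_
            rw [Real.sqrt_mul (Nat.cast_nonneg j)]
            ring
        _ = (1/(Δ * Real.sqrt Δ)) * ∑ j ∈ Finset.Ico m (m + (n - m)),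
              (1/((j:ℝ) * Real.sqrt (j:ℝ))) := by rw [Finset.mul_sum]
        _ ≤ (1/(Δ * Real.sqrt Δ)) * (6 / Real.sqrt (m:ℝ)) := by
            apply mul_le_mul_of_nonneg_left (sum_inv_pow32 m (n-m) hm1) (by positivity)
        _ ≤ (1/(Δ * Real.sqrt Δ)) * (6 / (Real.sqrt w / Real.sqrt Δ)) := by
            apply mul_le_mul_of_nonneg_left _ (by positivity)
            apply div_le_div_of_nonneg_left (by norm_num) hsqm0 hsqm
        _ = 6 / (Δ * Real.sqrt w) := by
            have h1 : Real.sqrt Δ ≠ 0 := by positivity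
            have h2 : Real.sqrt w ≠ 0 := by positivity
            field_simp
    -- component bounds for g
    have gle1 : ∀ j : ℕ, g j ≤ A/H := fun j => by
      simp only [hgdef]; exact min_le_left _ _
    have gle2 : ∀ j : ℕ, g j ≤ A/Q * (1/Real.sqrt ((j:ℝ)*Δ)) := fun j => by
      simp only [hgdef]; exact le_trans (min_le_right _ _) (min_le_left _ _)
    have gle3 : ∀ j : ℕ, g j ≤ A/P * (1/(((j:ℝ)*Δ) * Real.sqrt ((j:ℝ)*Δ))) := fun j => by
      simp only [hgdef]; exact le_trans (min_le_right _ _) (min_le_right _ _)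
    -- SUM1 : count-based bound for the flat part
    have SUM1 : ∀ u : ℝ, 0 ≤ u →
        Δ * ∑ j ∈ (Finset.Ico 1 n).filter (fun j : ℕ => (j:ℝ)*Δ ≤ u), g j ≤ A*u/H := by
      intro u hu
      have hsum : ∑ j ∈ (Finset.Ico 1 n).filter (fun j : ℕ => (j:ℝ)*Δ ≤ u), g j
          ≤ ((((Finset.Ico 1 n).filter (fun j : ℕ => (j:ℝ)*Δ ≤ u)).card : ℝ)) * (A/H) := by
        have := Finset.sum_le_card_nsmul
          ((Finset.Ico 1 n).filter (fun j : ℕ => (j:ℝ)*Δ ≤ u)) g (A/H) (fun j _ => gle1 j)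
        rwa [nsmul_eq_mul] at this
      calc Δ * ∑ j ∈ (Finset.Ico 1 n).filter (fun j : ℕ => (j:ℝ)*Δ ≤ u), g j
          ≤ Δ * (((((Finset.Ico 1 n).filter (fun j : ℕ => (j:ℝ)*Δ ≤ u)).card : ℝ)) * (A/H)) :=
            mul_le_mul_of_nonneg_left hsum hΔ.le
        _ ≤ Δ * ((u/Δ) * (A/H)) := by
            apply mul_le_mul_of_nonneg_left _ hΔ.le
            exact mul_le_mul_of_nonneg_right (COUNT u hu) (by positivity)
        _ = A*u/H := by field_simp
    -- the main bound on the g-part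
    have EST_G : Δ * ∑ j ∈ Finset.Ico 1 n, g j ≤ 9*A/(sab*P) := by
      rcases le_total (c*c) (a*b) with hcase | hcase
      · -- case c² ≤ ab
        have hcsab : c ≤ sab := by
          calc c = Real.sqrt (c*c) := by
                rw [show c*c = c^2 by ring, Real.sqrt_sq hc0.le]
            _ ≤ Real.sqrt (a*b) := Real.sqrt_le_sqrt hcase
            _ = sab := by rw [hsabdef]
        have hsplit1 := Finset.sum_filter_add_sum_filter_not (Finset.Ico 1 n)
          (fun j : ℕ => (j:ℝ)*Δ ≤ c*c) g
        have hsplit2 := Finset.sum_filter_add_sum_filter_not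
          ((Finset.Ico 1 n).filter (fun j : ℕ => ¬ (j:ℝ)*Δ ≤ c*c))
          (fun j : ℕ => (j:ℝ)*Δ ≤ a*b) g
        have T1 : Δ * ∑ j ∈ (Finset.Ico 1 n).filter (fun j : ℕ => (j:ℝ)*Δ ≤ c*c), g j
            ≤ A/(sab*P) := by
          refine le_trans (SUM1 (c*c) (by positivity)) ?_
          rw [hHc, hQab, div_le_div_iff₀ (by positivity) (by positivity)]
          have k1 : c*sab ≤ sab*sab := mul_le_mul_of_nonneg_right hcsab hsab0.le
          have k2 : sab*sab = a*b := by rw [← hsab2]; ring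
          calc A*(c*c)*(sab*P) = (A*c*P)*(c*sab) := by ring
            _ ≤ (A*c*P)*(sab*sab) := mul_le_mul_of_nonneg_left k1 (by positivity)
            _ = A*(c*(a*b*P)) := by rw [k2]; ring
        have T2 : Δ * ∑ j ∈ ((Finset.Ico 1 n).filter
              (fun j : ℕ => ¬ (j:ℝ)*Δ ≤ c*c)).filter (fun j : ℕ => (j:ℝ)*Δ ≤ a*b), g j
            ≤ 2*A/(sab*P) := by
          have hstep : ∑ j ∈ ((Finset.Ico 1 n).filter
              (fun j : ℕ => ¬ (j:ℝ)*Δ ≤ c*c)).filter (fun j : ℕ => (j:ℝ)*Δ ≤ a*b), g j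
              ≤ A/Q * (2 * sab / Δ) := by
            calc ∑ j ∈ ((Finset.Ico 1 n).filter
                  (fun j : ℕ => ¬ (j:ℝ)*Δ ≤ c*c)).filter (fun j : ℕ => (j:ℝ)*Δ ≤ a*b), g j
                ≤ ∑ j ∈ ((Finset.Ico 1 n).filter
                  (fun j : ℕ => ¬ (j:ℝ)*Δ ≤ c*c)).filter (fun j : ℕ => (j:ℝ)*Δ ≤ a*b),
                    A/Q * (1/Real.sqrt ((j:ℝ)*Δ)) :=
                  Finset.sum_le_sum (fun j _ => gle2 j)
              _ = A/Q * ∑ j ∈ ((Finset.Ico 1 n).filter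
                  (fun j : ℕ => ¬ (j:ℝ)*Δ ≤ c*c)).filter (fun j : ℕ => (j:ℝ)*Δ ≤ a*b),
                    (1/Real.sqrt ((j:ℝ)*Δ)) := by rw [Finset.mul_sum]
              _ ≤ A/Q * ∑ j ∈ (Finset.Ico 1 n).filter (fun j : ℕ => (j:ℝ)*Δ ≤ a*b),
                    (1/Real.sqrt ((j:ℝ)*Δ)) := by
                  apply mul_le_mul_of_nonneg_left _ (by positivity)
                  apply Finset.sum_le_sum_of_subset_of_nonneg
                  · intro j hj
                    simp only [Finset.mem_filter, Finset.mem_Ico] at hj ⊢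
                    exact ⟨hj.1.1, hj.2⟩
                  · intro j _ _; positivity
              _ ≤ A/Q * (2 * Real.sqrt (a*b) / Δ) :=
                  mul_le_mul_of_nonneg_left (SUM2 (a*b) (by positivity)) (by positivity)
              _ = A/Q * (2 * sab / Δ) := by rw [hsabdef]
          calc Δ * ∑ j ∈ ((Finset.Ico 1 n).filter
                (fun j : ℕ => ¬ (j:ℝ)*Δ ≤ c*c)).filter (fun j : ℕ => (j:ℝ)*Δ ≤ a*b), g j
              ≤ Δ * (A/Q * (2 * sab / Δ)) := mul_le_mul_of_nonneg_left hstep hΔ.le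
            _ = 2*A*sab/Q := by field_simp
            _ = 2*A/(sab*P) := by
                rw [hQab, ← hsab2]
                field_simp
        have T3 : Δ * ∑ j ∈ ((Finset.Ico 1 n).filter
              (fun j : ℕ => ¬ (j:ℝ)*Δ ≤ c*c)).filter (fun j : ℕ => ¬ (j:ℝ)*Δ ≤ a*b), g j
            ≤ 6*A/(sab*P) := by
          have hstep : ∑ j ∈ ((Finset.Ico 1 n).filter
              (fun j : ℕ => ¬ (j:ℝ)*Δ ≤ c*c)).filter (fun j : ℕ => ¬ (j:ℝ)*Δ ≤ a*b), g j
              ≤ A/P * (6 / (Δ * sab)) := by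
            calc ∑ j ∈ ((Finset.Ico 1 n).filter
                  (fun j : ℕ => ¬ (j:ℝ)*Δ ≤ c*c)).filter (fun j : ℕ => ¬ (j:ℝ)*Δ ≤ a*b), g j
                ≤ ∑ j ∈ ((Finset.Ico 1 n).filter
                  (fun j : ℕ => ¬ (j:ℝ)*Δ ≤ c*c)).filter (fun j : ℕ => ¬ (j:ℝ)*Δ ≤ a*b),
                    A/P * (1/(((j:ℝ)*Δ) * Real.sqrt ((j:ℝ)*Δ))) :=
                  Finset.sum_le_sum (fun j _ => gle3 j)
              _ = A/P * ∑ j ∈ ((Finset.Ico 1 n).filter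
                  (fun j : ℕ => ¬ (j:ℝ)*Δ ≤ c*c)).filter (fun j : ℕ => ¬ (j:ℝ)*Δ ≤ a*b),
                    (1/(((j:ℝ)*Δ) * Real.sqrt ((j:ℝ)*Δ))) := by rw [Finset.mul_sum]
              _ ≤ A/P * ∑ j ∈ (Finset.Ico 1 n).filter (fun j : ℕ => a*b < (j:ℝ)*Δ),
                    (1/(((j:ℝ)*Δ) * Real.sqrt ((j:ℝ)*Δ))) := by
                  apply mul_le_mul_of_nonneg_left _ (by positivity)
                  apply Finset.sum_le_sum_of_subset_of_nonneg
                  · intro j hj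
                    simp only [Finset.mem_filter, Finset.mem_Ico, not_le] at hj ⊢
                    exact ⟨hj.1.1, hj.2⟩
                  · intro j _ _
                    positivity
              _ ≤ A/P * (6 / (Δ * Real.sqrt (a*b))) :=
                  mul_le_mul_of_nonneg_left (SUM3 (a*b) (by positivity)) (by positivity)
              _ = A/P * (6 / (Δ * sab)) := by rw [hsabdef]
          calc Δ * ∑ j ∈ ((Finset.Ico 1 n).filter
                (fun j : ℕ => ¬ (j:ℝ)*Δ ≤ c*c)).filter (fun j : ℕ => ¬ (j:ℝ)*Δ ≤ a*b), g j
              ≤ Δ * (A/P * (6 / (Δ * sab))) := mul_le_mul_of_nonneg_left hstep hΔ.le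
            _ = 6*A/(sab*P) := by field_simp
        have heq : Δ * ∑ j ∈ Finset.Ico 1 n, g j
            = Δ * ∑ j ∈ (Finset.Ico 1 n).filter (fun j : ℕ => (j:ℝ)*Δ ≤ c*c), g j
            + Δ * ∑ j ∈ ((Finset.Ico 1 n).filter
                (fun j : ℕ => ¬ (j:ℝ)*Δ ≤ c*c)).filter (fun j : ℕ => (j:ℝ)*Δ ≤ a*b), g j
            + Δ * ∑ j ∈ ((Finset.Ico 1 n).filter
                (fun j : ℕ => ¬ (j:ℝ)*Δ ≤ c*c)).filter (fun j : ℕ => ¬ (j:ℝ)*Δ ≤ a*b), g j := by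
          rw [← hsplit1, ← hsplit2]
          ring
        rw [heq]
        refine le_trans (add_le_add (add_le_add T1 T2) T3) (le_of_eq ?_)
        ring
      · -- case ab ≤ c²
        set s3 := (c*(a*b)) ^ ((1:ℝ)/3) with hs3def
        have hs30 : 0 < s3 := Real.rpow_pos_of_pos (by positivity) _
        have hs3cube : s3^3 = c*(a*b) := by
          rw [hs3def, ← Real.rpow_natCast ((c*(a*b)) ^ ((1:ℝ)/3)) 3,
            ← Real.rpow_mul (by positivity)]
          norm_num
        have hsabc : sab ≤ c := by
          calc sab = Real.sqrt (a*b) := by rw [hsabdef]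
            _ ≤ Real.sqrt (c*c) := Real.sqrt_le_sqrt hcase
            _ = c := by rw [show c*c = c^2 by ring, Real.sqrt_sq hc0.le]
        have hsab_le : sab ≤ s3 := by
          apply le_of_pow_le_pow_left₀ (by norm_num : (3:ℕ) ≠ 0) hs30.le
          rw [hs3cube]
          have k : (a*b)*sab ≤ (a*b)*c := mul_le_mul_of_nonneg_left hsabc (by positivity)
          calc sab^3 = (a*b)*sab := by rw [← hsab2]; ring
            _ ≤ (a*b)*c := k
            _ = c*(a*b) := by ring
        have hsplit1 := Finset.sum_filter_add_sum_filter_not (Finset.Ico 1 n)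
          (fun j : ℕ => (j:ℝ)*Δ ≤ s3^2) g
        have T1 : Δ * ∑ j ∈ (Finset.Ico 1 n).filter (fun j : ℕ => (j:ℝ)*Δ ≤ s3^2), g j
            ≤ A/(sab*P) := by
          refine le_trans (SUM1 (s3^2) (by positivity)) ?_
          rw [hHc, hQab, div_le_div_iff₀ (by positivity) (by positivity)]
          have k1 : s3^2*sab ≤ s3^2*s3 := mul_le_mul_of_nonneg_left hsab_le (by positivity)
          calc A*(s3^2)*(sab*P) = (A*P)*(s3^2*sab) := by ring
            _ ≤ (A*P)*(s3^2*s3) := mul_le_mul_of_nonneg_left k1 (by positivity)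
            _ = (A*P)*(s3^3) := by ring
            _ = A*(c*(a*b*P)) := by rw [hs3cube]; ring
        have T2 : Δ * ∑ j ∈ (Finset.Ico 1 n).filter (fun j : ℕ => ¬ (j:ℝ)*Δ ≤ s3^2), g j
            ≤ 6*A/(sab*P) := by
          have hstep : ∑ j ∈ (Finset.Ico 1 n).filter (fun j : ℕ => ¬ (j:ℝ)*Δ ≤ s3^2), g j
              ≤ A/P * (6 / (Δ * s3)) := by
            calc ∑ j ∈ (Finset.Ico 1 n).filter (fun j : ℕ => ¬ (j:ℝ)*Δ ≤ s3^2), g j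
                ≤ ∑ j ∈ (Finset.Ico 1 n).filter (fun j : ℕ => ¬ (j:ℝ)*Δ ≤ s3^2),
                    A/P * (1/(((j:ℝ)*Δ) * Real.sqrt ((j:ℝ)*Δ))) :=
                  Finset.sum_le_sum (fun j _ => gle3 j)
              _ = A/P * ∑ j ∈ (Finset.Ico 1 n).filter (fun j : ℕ => ¬ (j:ℝ)*Δ ≤ s3^2),
                    (1/(((j:ℝ)*Δ) * Real.sqrt ((j:ℝ)*Δ))) := by rw [Finset.mul_sum]
              _ ≤ A/P * ∑ j ∈ (Finset.Ico 1 n).filter (fun j : ℕ => s3^2 < (j:ℝ)*Δ),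
                    (1/(((j:ℝ)*Δ) * Real.sqrt ((j:ℝ)*Δ))) := by
                  apply mul_le_mul_of_nonneg_left _ (by positivity)
                  apply Finset.sum_le_sum_of_subset_of_nonneg
                  · intro j hj
                    simp only [Finset.mem_filter, Finset.mem_Ico, not_le] at hj ⊢
                    exact ⟨hj.1, hj.2⟩
                  · intro j _ _
                    positivity
              _ ≤ A/P * (6 / (Δ * Real.sqrt (s3^2))) :=
                  mul_le_mul_of_nonneg_left (SUM3 (s3^2) (by positivity)) (by positivity)
              _ = A/P * (6 / (Δ * s3)) := by rw [Real.sqrt_sq hs30.le]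
          calc Δ * ∑ j ∈ (Finset.Ico 1 n).filter (fun j : ℕ => ¬ (j:ℝ)*Δ ≤ s3^2), g j
              ≤ Δ * (A/P * (6 / (Δ * s3))) := mul_le_mul_of_nonneg_left hstep hΔ.le
            _ = 6*A/(s3*P) := by field_simp
            _ ≤ 6*A/(sab*P) := by
                apply div_le_div_of_nonneg_left (by positivity) (by positivity)
                exact mul_le_mul_of_nonneg_right hsab_le hP0.le
        have heq : Δ * ∑ j ∈ Finset.Ico 1 n, g j
            = Δ * ∑ j ∈ (Finset.Ico 1 n).filter (fun j : ℕ => (j:ℝ)*Δ ≤ s3^2), g j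
            + Δ * ∑ j ∈ (Finset.Ico 1 n).filter (fun j : ℕ => ¬ (j:ℝ)*Δ ≤ s3^2), g j := by
          rw [← hsplit1]
          ring
        rw [heq]
        refine le_trans (add_le_add T1 T2) ?_
        rw [show A/(sab*P) + 6*A/(sab*P) = 7*A/(sab*P) by ring]
        exact (div_le_div_iff_of_pos_right (by positivity)).mpr (by linarith)
    -- the bound on the e-part
    have EST_E : Δ * ∑ j ∈ Finset.Ico 1 n, e j ≤ 2*A/ρ*L + A/ρ + A*Δ := by
      have ele1 : ∀ j : ℕ, e j ≤ A := fun j => by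
        simp only [hedef]; exact min_le_left _ _
      have ele2 : ∀ j : ℕ, e j ≤ A/H^2 * r^j := fun j => by
        simp only [hedef]; exact min_le_right _ _
      have he0 : ∀ j : ℕ, 0 ≤ e j := fun j => by
        simp only [hedef]
        exact le_min hA.le (by positivity)
      have hsplitE := Finset.sum_filter_add_sum_filter_not (Finset.Ico 1 n)
        (fun j : ℕ => (j:ℝ)*Δ ≤ t1) e
      have part1 : ∑ j ∈ (Finset.Ico 1 n).filter (fun j : ℕ => (j:ℝ)*Δ ≤ t1), e j
          ≤ (t1/Δ) * A := by
        calc ∑ j ∈ (Finset.Ico 1 n).filter (fun j : ℕ => (j:ℝ)*Δ ≤ t1), e j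
            ≤ (((Finset.Ico 1 n).filter (fun j : ℕ => (j:ℝ)*Δ ≤ t1)).card) • A :=
              Finset.sum_le_card_nsmul _ _ _ (fun j _ => ele1 j)
          _ = ((((Finset.Ico 1 n).filter (fun j : ℕ => (j:ℝ)*Δ ≤ t1)).card : ℝ)) * A := by
              rw [nsmul_eq_mul]
          _ ≤ (t1/Δ)*A := mul_le_mul_of_nonneg_right (COUNT t1 ht1_0) hA.le
      have h1r : 0 < 1-r := by linarith
      have part2 : ∑ j ∈ (Finset.Ico 1 n).filter (fun j : ℕ => ¬ (j:ℝ)*Δ ≤ t1), e j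
          ≤ A/(1-r) := by
        set m := ⌊t1/Δ⌋₊ + 1 with hmdef
        have hmR : t1/Δ ≤ (m:ℝ) := by
          have := (Nat.lt_floor_add_one (t1/Δ)).le
          push_cast [hmdef]
          push_cast at this
          linarith
        have hsub : (Finset.Ico 1 n).filter (fun j : ℕ => ¬ (j:ℝ)*Δ ≤ t1)
            ⊆ Finset.Ico m n := by
          intro j hj
          simp only [Finset.mem_filter, Finset.mem_Ico, not_le] at hj
          rw [Finset.mem_Ico]
          have hjm : ⌊t1/Δ⌋₊ < j := by
            have h1 : t1/Δ < (j:ℝ) := by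
              rw [div_lt_iff₀ hΔ]
              exact hj.2
            have h2 : ((⌊t1/Δ⌋₊ : ℕ) : ℝ) ≤ t1/Δ := Nat.floor_le (by positivity)
            exact_mod_cast lt_of_le_of_lt h2 h1
          exact ⟨by omega, hj.1.2⟩
        have hrm : r^m ≤ H^2 := by
          have hh1 : r^m = Real.exp ((m:ℝ) * (-(ρ*Δ))) := by
            rw [hrdef, ← Real.exp_nat_mul]
          have hh2 : H^2 = Real.exp (2*Real.log H) := by
            rw [show (2:ℝ)*Real.log H = Real.log (H^2) by rw [Real.log_pow]; push_cast; ring]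
            exact (Real.exp_log (by positivity)).symm
          rw [hh1, hh2]
          apply Real.exp_le_exp.mpr
          have hmt : t1 ≤ (m:ℝ)*Δ := by
            calc t1 = (t1/Δ)*Δ := by field_simp
              _ ≤ (m:ℝ)*Δ := mul_le_mul_of_nonneg_right hmR hΔ.le
          have hlog : 2*Real.log H = -(ρ*t1) := by
            rw [ht1def, hL_eq]
            field_simp
          rw [hlog]
          have := mul_le_mul_of_nonneg_left hmt hρ.le
          linarith
        calc ∑ j ∈ (Finset.Ico 1 n).filter (fun j : ℕ => ¬ (j:ℝ)*Δ ≤ t1), e j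
            ≤ ∑ j ∈ (Finset.Ico 1 n).filter (fun j : ℕ => ¬ (j:ℝ)*Δ ≤ t1), A/H^2 * r^j :=
              Finset.sum_le_sum (fun j _ => ele2 j)
          _ ≤ ∑ j ∈ Finset.Ico m n, A/H^2 * r^j :=
              Finset.sum_le_sum_of_subset_of_nonneg hsub (fun j _ _ => by positivity)
          _ = A/H^2 * ∑ j ∈ Finset.Ico m n, r^j := by rw [Finset.mul_sum]
          _ ≤ A/H^2 * (r^m/(1-r)) :=
              mul_le_mul_of_nonneg_left (geom_tail r hr0 hr1 m n) (by positivity)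
          _ ≤ A/H^2 * (H^2/(1-r)) := by
              apply mul_le_mul_of_nonneg_left _ (by positivity)
              exact (div_le_div_iff_of_pos_right h1r).mpr hrm
          _ = A/(1-r) := by field_simp
      have hΔr : Δ*(A/(1-r)) ≤ A/ρ + A*Δ := by
        have hrle : r ≤ 1/(1+ρ*Δ) := by
          rw [hrdef, Real.exp_neg, inv_eq_one_div]
          apply one_div_le_one_div_of_le (by positivity)
          have := Real.add_one_le_exp (ρ*Δ)
          linarith
        have h2 : ρ*Δ/(1+ρ*Δ) ≤ 1-r := by
          have h3 : 1 - 1/(1+ρ*Δ) = ρ*Δ/(1+ρ*Δ) := by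
            field_simp; ring
          linarith
        have h4 : A/(1-r) ≤ A/(ρ*Δ/(1+ρ*Δ)) :=
          div_le_div_of_nonneg_left hA.le (by positivity) h2
        have h5 : A/(ρ*Δ/(1+ρ*Δ)) = A*(1+ρ*Δ)/(ρ*Δ) := by
          field_simp
        calc Δ*(A/(1-r)) ≤ Δ*(A*(1+ρ*Δ)/(ρ*Δ)) := by
              apply mul_le_mul_of_nonneg_left _ hΔ.le
              rw [← h5]
              exact h4
          _ = A/ρ + A*Δ := by field_simp
      calc Δ * ∑ j ∈ Finset.Ico 1 n, e j
          = Δ * (∑ j ∈ (Finset.Ico 1 n).filter (fun j : ℕ => (j:ℝ)*Δ ≤ t1), e j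
            + ∑ j ∈ (Finset.Ico 1 n).filter (fun j : ℕ => ¬ (j:ℝ)*Δ ≤ t1), e j) := by
            rw [hsplitE]
        _ ≤ Δ * ((t1/Δ)*A + A/(1-r)) := by
            apply mul_le_mul_of_nonneg_left _ hΔ.le
            linarith [part1, part2]
        _ = t1*A + Δ*(A/(1-r)) := by field_simp
        _ ≤ 2*A/ρ*L + A/ρ + A*Δ := by
            have ht1A : t1*A = 2*A/ρ*L := by
              rw [ht1def]
              field_simp
            linarith [hΔr]
    -- assemble
    have hsplit0 : ∑ j ∈ Finset.range n, |k j| = |k 0| + ∑ j ∈ Finset.Ico 1 n, |k j| := by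
      rw [Finset.range_eq_Ico, Finset.sum_eq_sum_Ico_succ_bot (by omega : 0 < n)]
    have hIco : ∑ j ∈ Finset.Ico 1 n, |k j| ≤ ∑ j ∈ Finset.Ico 1 n, (g j + e j) :=
      Finset.sum_le_sum hpt
    have hge : ∑ j ∈ Finset.Ico 1 n, (g j + e j)
        = ∑ j ∈ Finset.Ico 1 n, g j + ∑ j ∈ Finset.Ico 1 n, e j := Finset.sum_add_distrib
    have hk0 := hk1 0 (by omega)
    have hΔH : Δ ≤ Δ/H := by
      rw [le_div_iff₀ hH0]
      have := mul_le_mul_of_nonneg_left hH1 hΔ.le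
      linarith
    have hApos : 0 < A/ρ := by positivity
    calc Δ * ∑ j ∈ Finset.range n, |k j|
        = Δ*|k 0| + Δ * ∑ j ∈ Finset.Ico 1 n, |k j| := by rw [hsplit0]; ring
      _ ≤ Δ*(A/H) + (Δ * ∑ j ∈ Finset.Ico 1 n, g j + Δ * ∑ j ∈ Finset.Ico 1 n, e j) := by
          have hh1 : Δ*|k 0| ≤ Δ*(A/H) := mul_le_mul_of_nonneg_left hk0 hΔ.le
          have hh2 : Δ * ∑ j ∈ Finset.Ico 1 n, |k j|
              ≤ Δ * ∑ j ∈ Finset.Ico 1 n, g j + Δ * ∑ j ∈ Finset.Ico 1 n, e j := by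
            calc Δ * ∑ j ∈ Finset.Ico 1 n, |k j|
                ≤ Δ * ∑ j ∈ Finset.Ico 1 n, (g j + e j) :=
                  mul_le_mul_of_nonneg_left hIco hΔ.le
              _ = Δ * ∑ j ∈ Finset.Ico 1 n, g j + Δ * ∑ j ∈ Finset.Ico 1 n, e j := by
                  rw [hge]; ring
          linarith
      _ ≤ Δ*(A/H) + (9*A/(sab*P) + (2*A/ρ*L + A/ρ + A*Δ)) := by linarith [EST_G, EST_E]
      _ ≤ C * (1/(sab*P) + 1 + L + Δ/H) := by
          have hxpos : (0:ℝ) < 1/(sab*P) := by positivity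
          have hdivs : 2*(A/ρ) = 2*A/ρ ∧ 4*(A/ρ) = 4*A/ρ := by constructor <;> ring
          have hC9 : 9*A ≤ C := by rw [hCdef]; linarith [hApos]
          have e1 : 9*A/(sab*P) ≤ C*(1/(sab*P)) := by
            rw [mul_one_div]
            exact (div_le_div_iff_of_pos_right (by positivity)).mpr hC9
          have e2 : 2*A/ρ*L ≤ C*L := by
            apply mul_le_mul_of_nonneg_right _ hL0
            rw [hCdef]
            linarith [hApos, hA, hdivs.1, hdivs.2]
          have e3 : A/ρ ≤ C := by
            rw [hCdef]
            linarith [hApos, hA, hdivs.2]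
          have e4 : Δ*(A/H) + A*Δ ≤ C*(Δ/H) := by
            have h2A : 2*A ≤ C := by rw [hCdef]; linarith [hApos, hA, hdivs.2]
            have hd1 : Δ*(A/H) = A*(Δ/H) := by ring
            have hd2 : A*Δ ≤ A*(Δ/H) := mul_le_mul_of_nonneg_left hΔH hA.le
            have hd3 : (2*A)*(Δ/H) ≤ C*(Δ/H) :=
              mul_le_mul_of_nonneg_right h2A (by positivity)
            linarith [hd1, hd2, hd3]
          have expand : C*(1/(sab*P) + 1 + L + Δ/H)
              = C*(1/(sab*P)) + C + C*L + C*(Δ/H) := by ring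
          linarith
  -- final assembly
  have hsum : ∑ j ∈ Finset.range n, ((n:ℝ) - (j:ℝ)) * |k j|
      ≤ (n:ℝ) * ∑ j ∈ Finset.range n, |k j| := by
    rw [Finset.mul_sum]
    apply Finset.sum_le_sum
    intro j _
    apply mul_le_mul_of_nonneg_right _ (abs_nonneg _)
    have : (0:ℝ) ≤ (j:ℝ) := Nat.cast_nonneg j
    linarith
  have hstep : Δ ^ 2 / ((n : ℝ) * Δ) ^ 2 * ∑ j ∈ Finset.range n, ((n:ℝ) - (j:ℝ)) * |k j|
      ≤ 1 / ((n:ℝ) * Δ) * (Δ * ∑ j ∈ Finset.range n, |k j|) := by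
    calc Δ ^ 2 / ((n : ℝ) * Δ) ^ 2 * ∑ j ∈ Finset.range n, ((n:ℝ) - (j:ℝ)) * |k j|
        ≤ Δ ^ 2 / ((n : ℝ) * Δ) ^ 2 * ((n:ℝ) * ∑ j ∈ Finset.range n, |k j|) :=
          mul_le_mul_of_nonneg_left hsum (by positivity)
      _ = 1 / ((n:ℝ) * Δ) * (Δ * ∑ j ∈ Finset.range n, |k j|) := by
          field_simp
  calc Δ ^ 2 / ((n : ℝ) * Δ) ^ 2 * ∑ j ∈ Finset.range n, ((n:ℝ) - (j:ℝ)) * |k j|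
      ≤ 1 / ((n:ℝ) * Δ) * (Δ * ∑ j ∈ Finset.range n, |k j|) := hstep
    _ ≤ 1 / ((n:ℝ) * Δ) * (C * (1 / (sab * P) + 1 + L + Δ / H)) :=
        mul_le_mul_of_nonneg_left KEY (by positivity)
    _ = C / ((n:ℝ) * Δ) * (1 / (sab * P) + 1 + L + Δ / H) := by ring
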